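/- Fix K ∈ ℕ with K ≥ 1, N = 2K+1, L > 0, ε ∈ ℝ, M > 0, a > 0, b, c ∈ ℝ, and let u¹, u⁰, v be real-valued grid functions satisfying the mass constraint a·∑_s v(s) + b·∑_s u¹(s) + c·∑_s u⁰(s) = 0. Define G_N(z) = (1/(2Ma))·‖a·z + b·u¹ + c·u⁰‖₋₁,N² + E_N(z) for real-valued grid functions z, and μ_N(v) = v³ + (1−ε)v + 2Δ_N v + Δ_N² v. Then the following are equivalent: (i) v solves the fully discrete BDF2–PFC equation a·v + b·u¹ + c·u⁰ = M·Δ_N(μ_N(v)) (equality of grid functions); (ii) v is a critical point of G_N along mass-conserving directions, i.e., for every real-valued grid function w with zero mean, the function s ↦ G_N(v + s·w) has derivative 0 at s = 0. -/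

import Mathlib

open Complex

noncomputable section

/-- A grid function on the `N × N` grid with `N = 2K+1`. -/
abbrev GridFn (K : ℕ) := Fin (2 * K + 1) × Fin (2 * K + 1) → ℂ

/-- A grid function is real-valued if all its values are real. -/
def RealValued {K : ℕ} (w : GridFn K) : Prop := ∀ m, (w m).im = 0

/-- A grid function has zero (discrete) mean if its values sum to zero. -/
def ZeroMean {K : ℕ} (w : GridFn K) : Prop := (∑ s, w s) = 0

/-- The discrete Fourier coefficient `ĉ_w(r) = N⁻² ∑_s w(s) exp(−2πi(r₁s₁+r₂s₂)/N)`. -/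
def dft (K : ℕ) (w : GridFn K) (r : ℤ × ℤ) : ℂ :=
  ((2 * K + 1 : ℂ) ^ 2)⁻¹ *
    ∑ s : Fin (2 * K + 1) × Fin (2 * K + 1),
      w s * Complex.exp (-(2 * Real.pi * Complex.I) *
        ((r.1 : ℂ) * ((s.1 : ℕ) : ℂ) + (r.2 : ℂ) * ((s.2 : ℕ) : ℂ)) / (2 * K + 1))

/-- The set of nonzero frequencies `{r ∈ ℤ² : −K ≤ r₁,r₂ ≤ K} \ {0}`. -/
def freqs (K : ℕ) : Finset (ℤ × ℤ) :=
  (Finset.Icc (-(K : ℤ)) K ×ˢ Finset.Icc (-(K : ℤ)) K).erase (0, 0)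

/-- The spectral operator `(−Δ_N)^α` for `α ∈ {−1, 1, 2}` (defined for any `α : ℤ`):
`((−Δ_N)^α w)(m) = ∑_{r ≠ 0} (4π²|r|²/L²)^α ĉ_w(r) exp(2πi r·m/N)`. -/
def specOp (K : ℕ) (L : ℝ) (α : ℤ) (w : GridFn K) : GridFn K := fun m =>
  ∑ r ∈ freqs K,
    (((4 * Real.pi ^ 2 * ((r.1 : ℝ) ^ 2 + (r.2 : ℝ) ^ 2) / L ^ 2 : ℝ) : ℂ)) ^ α *
      dft K w r *
      Complex.exp ((2 * Real.pi * Complex.I) *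
        ((r.1 : ℂ) * ((m.1 : ℕ) : ℂ) + (r.2 : ℂ) * ((m.2 : ℕ) : ℂ)) / (2 * K + 1))

/-- The discrete Laplacian `Δ_N w = −((−Δ_N)¹ w)`. -/
def lapN (K : ℕ) (L : ℝ) (w : GridFn K) : GridFn K := fun m => -(specOp K L 1 w m)

/-- The discrete biharmonic operator `Δ_N² w = (−Δ_N)² w`. -/
def bilapN (K : ℕ) (L : ℝ) (w : GridFn K) : GridFn K := specOp K L 2 w

/-- The discrete inverse (negative) Laplacian `(−Δ_N)⁻¹`. -/
def invNegLapN (K : ℕ) (L : ℝ) (w : GridFn K) : GridFn K := specOp K L (-1) w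

/-- The discrete inner product `(u,v)_N = h² ∑_s u(s) conj(v(s))` with `h = L/N`. -/
def ipN (K : ℕ) (L : ℝ) (u v : GridFn K) : ℂ :=
  (((L / (2 * K + 1)) ^ 2 : ℝ) : ℂ) * ∑ s, u s * (starRingEnd ℂ) (v s)

/-- The spectral partial derivative `D₁` (in the first coordinate direction). -/
def D1 (K : ℕ) (L : ℝ) (w : GridFn K) : GridFn K := fun m =>
  ∑ r ∈ Finset.Icc (-(K : ℤ)) K ×ˢ Finset.Icc (-(K : ℤ)) K,
    (2 * Real.pi * Complex.I * (r.1 : ℂ) / (L : ℂ)) * dft K w r *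
      Complex.exp ((2 * Real.pi * Complex.I) *
        ((r.1 : ℂ) * ((m.1 : ℕ) : ℂ) + (r.2 : ℂ) * ((m.2 : ℕ) : ℂ)) / (2 * K + 1))

/-- The spectral partial derivative `D₂` (in the second coordinate direction). -/
def D2 (K : ℕ) (L : ℝ) (w : GridFn K) : GridFn K := fun m =>
  ∑ r ∈ Finset.Icc (-(K : ℤ)) K ×ˢ Finset.Icc (-(K : ℤ)) K,
    (2 * Real.pi * Complex.I * (r.2 : ℂ) / (L : ℂ)) * dft K w r *
      Complex.exp ((2 * Real.pi * Complex.I) *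
        ((r.1 : ℂ) * ((m.1 : ℕ) : ℂ) + (r.2 : ℂ) * ((m.2 : ℕ) : ℂ)) / (2 * K + 1))

/-- The discrete squared gradient `|∇_N w|²(m) = |(D₁w)(m)|² + |(D₂w)(m)|²`. -/
def gradSqN (K : ℕ) (L : ℝ) (w : GridFn K) (m : Fin (2 * K + 1) × Fin (2 * K + 1)) : ℝ :=
  ‖D1 K L w m‖ ^ 2 + ‖D2 K L w m‖ ^ 2

/-- The discrete PFC energy
`E_N(z) = h² ∑_m [¼z(m)⁴ + ((1−ε)/2)z(m)² − |∇_N z|²(m) + ½|(Δ_N z)(m)|²]`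
of a real-valued grid function `z`. -/
def EN (K : ℕ) (L ε : ℝ) (z : GridFn K) : ℝ :=
  (L / (2 * K + 1)) ^ 2 *
    ∑ m, ((1/4) * (z m).re ^ 4 + ((1 - ε) / 2) * (z m).re ^ 2
      - gradSqN K L z m + (1/2) * ‖lapN K L z m‖ ^ 2)

/-- The squared discrete negative norm `‖w‖₋₁,N² = Re((−Δ_N)⁻¹w, w)_N`. -/
def negNormSq (K : ℕ) (L : ℝ) (w : GridFn K) : ℝ :=
  (ipN K L (invNegLapN K L w) w).re

/-- The discrete PFC chemical potential `μ_N(v) = v³ + (1−ε)v + 2Δ_N v + Δ_N² v`. -/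
def muN (K : ℕ) (L ε : ℝ) (v : GridFn K) : GridFn K := fun m =>
  (v m) ^ 3 + ((1 - ε : ℝ) : ℂ) * v m + 2 * lapN K L v m + bilapN K L v m

/-- The objective `G_N(z) = (1/(2Ma))‖a z + b u¹ + c u⁰‖₋₁,N² + E_N(z)`. -/
def GN (K : ℕ) (L ε M a b c : ℝ) (u1 u0 : GridFn K) (z : GridFn K) : ℝ :=
  (1 / (2 * M * a)) *
    negNormSq K L (fun m => (a : ℂ) * z m + (b : ℂ) * u1 m + (c : ℂ) * u0 m)
    + EN K L ε z


-- ================= auxiliary development =================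

namespace PFCaux

/-- The exponential `e_r(m) = exp(2πi(r·m)/N)`. -/
def ee (K : ℕ) (r : ℤ × ℤ) (m : Fin (2 * K + 1) × Fin (2 * K + 1)) : ℂ :=
  Complex.exp ((2 * Real.pi * Complex.I) *
    ((r.1 : ℂ) * ((m.1 : ℕ) : ℂ) + (r.2 : ℂ) * ((m.2 : ℕ) : ℂ)) / (2 * K + 1))

/-- The eigenvalue `λ_r = 4π²|r|²/L²`. -/
def lam (L : ℝ) (r : ℤ × ℤ) : ℝ :=
  4 * Real.pi ^ 2 * ((r.1 : ℝ) ^ 2 + (r.2 : ℝ) ^ 2) / L ^ 2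

lemma specOp_apply (K : ℕ) (L : ℝ) (α : ℤ) (w : GridFn K) (m) :
    specOp K L α w m = ∑ r ∈ freqs K, ((lam L r : ℝ) : ℂ) ^ α * dft K w r * ee K r m := rfl

lemma dft_eq (K : ℕ) (w : GridFn K) (r : ℤ × ℤ) :
    dft K w r = ((2 * K + 1 : ℂ) ^ 2)⁻¹ * ∑ s, w s * ee K (-r) s := by
  unfold dft ee
  congr 1
  refine Finset.sum_congr rfl fun s _ => ?_
  congr 1
  congr 1
  simp only [Prod.fst_neg, Prod.snd_neg]
  push_cast
  ring

lemma two_pi_I_ne_zero : (2 * Real.pi * Complex.I : ℂ) ≠ 0 := by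
  simp [Real.pi_ne_zero, Complex.I_ne_zero, Complex.ofReal_ne_zero]

lemma geom_range (n : ℕ) (hn : 0 < n) (d : ℤ) :
    ∑ j ∈ Finset.range n, Complex.exp (2 * Real.pi * Complex.I * d * j / n)
      = if (n : ℤ) ∣ d then (n : ℂ) else 0 := by
  have hn' : (n : ℂ) ≠ 0 := Nat.cast_ne_zero.mpr hn.ne'
  have hexp : ∀ j : ℕ, Complex.exp (2 * Real.pi * Complex.I * d * j / n)
      = Complex.exp (2 * Real.pi * Complex.I * d / n) ^ j := by
    intro j
    rw [← Complex.exp_nat_mul]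
    congr 1
    ring
  by_cases hdvd : (n : ℤ) ∣ d
  · rw [if_pos hdvd]
    obtain ⟨k, hk⟩ := hdvd
    have h1 : Complex.exp (2 * Real.pi * Complex.I * d / n) = 1 := by
      have harg : (2 * Real.pi * Complex.I * d / n : ℂ) = k * (2 * Real.pi * Complex.I) := by
        subst hk
        push_cast
        field_simp
      rw [harg, Complex.exp_int_mul_two_pi_mul_I]
    simp [hexp, h1]
  · have hne : Complex.exp (2 * Real.pi * Complex.I * d / n) ≠ 1 := by
      intro h
      rw [Complex.exp_eq_one_iff] at h
      obtain ⟨k, hk⟩ := h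
      apply hdvd
      refine ⟨k, ?_⟩
      have h4 : (d : ℂ) / n = k := by
        refine mul_left_cancel₀ two_pi_I_ne_zero ?_
        rw [← mul_div_assoc, hk]
        ring
      rw [div_eq_iff hn'] at h4
      have h5 : (d : ℂ) = n * k := by rw [h4]; ring
      exact_mod_cast h5
    have hNpow : Complex.exp (2 * Real.pi * Complex.I * d / n) ^ n = 1 := by
      rw [← Complex.exp_nat_mul]
      have harg : (n : ℂ) * (2 * Real.pi * Complex.I * d / n) = d * (2 * Real.pi * Complex.I) := by
        field_simp
      rw [harg, Complex.exp_int_mul_two_pi_mul_I]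
    simp only [hexp]
    rw [geom_sum_eq hne, hNpow]
    simp [hdvd]

lemma Icc_inj_aux (K : ℕ) : Function.Injective fun j : ℕ => (j : ℤ) - K :=
  fun x y h => by dsimp only at h; omega

lemma Icc_eq_map (K : ℕ) :
    Finset.Icc (-(K : ℤ)) K
      = (Finset.range (2 * K + 1)).map ⟨fun j : ℕ => (j : ℤ) - K, Icc_inj_aux K⟩ := by
  ext x
  simp only [Finset.mem_Icc, Finset.mem_map, Finset.mem_range, Function.Embedding.coeFn_mk]
  constructor
  · intro h
    exact ⟨(x + K).toNat, by omega, by omega⟩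
  · rintro ⟨j, hj, rfl⟩
    omega

lemma geom_Icc (K : ℕ) (d : ℤ) :
    ∑ r ∈ Finset.Icc (-(K : ℤ)) K,
        Complex.exp (2 * Real.pi * Complex.I * r * d / ((2 * K + 1 : ℕ) : ℂ))
      = if ((2 * K + 1 : ℕ) : ℤ) ∣ d then ((2 * K + 1 : ℕ) : ℂ) else 0 := by
  have hn : 0 < 2 * K + 1 := by omega
  have hn' : ((2 * K + 1 : ℕ) : ℂ) ≠ 0 := Nat.cast_ne_zero.mpr hn.ne'
  rw [Icc_eq_map K, Finset.sum_map]
  simp only [Function.Embedding.coeFn_mk]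
  have hsplit : ∀ j : ℕ,
      Complex.exp (2 * Real.pi * Complex.I * ((j : ℤ) - (K : ℤ) : ℤ) * d / ((2 * K + 1 : ℕ) : ℂ))
        = Complex.exp (2 * Real.pi * Complex.I * d * j / ((2 * K + 1 : ℕ) : ℂ))
          * Complex.exp (2 * Real.pi * Complex.I * (-(K : ℤ) : ℤ) * d / ((2 * K + 1 : ℕ) : ℂ)) := by
    intro j
    rw [← Complex.exp_add]
    congr 1
    push_cast
    ring
  simp only [hsplit]
  rw [← Finset.sum_mul, geom_range _ hn d]
  by_cases hdvd : ((2 * K + 1 : ℕ) : ℤ) ∣ d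
  · rw [if_pos hdvd]
    obtain ⟨k, hk⟩ := hdvd
    have harg : (2 * Real.pi * Complex.I * (-(K : ℤ) : ℤ) * d / ((2 * K + 1 : ℕ) : ℂ) : ℂ)
        = ((-(K : ℤ) * k : ℤ) : ℂ) * (2 * Real.pi * Complex.I) := by
      have hKc : (2 * (K : ℂ) + 1) ≠ 0 := by
        have := hn'
        push_cast at this ⊢
        exact this
      subst hk
      push_cast
      field_simp
    rw [harg, Complex.exp_int_mul_two_pi_mul_I, mul_one]
  · rw [if_neg hdvd, zero_mul]

lemma natAbs_le_of_lt {n : ℕ} {x y : ℕ} (hx : x < n) (hy : y < n) :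
    ((x : ℤ) - (y : ℤ)).natAbs ≤ n - 1 := by omega

lemma dvd_small_eq_zero {K : ℕ} {d : ℤ} (hdvd : ((2 * K + 1 : ℕ) : ℤ) ∣ d)
    (hb : d.natAbs ≤ 2 * K) : d = 0 := by
  obtain ⟨k, rfl⟩ := hdvd
  rcases Nat.eq_zero_or_pos k.natAbs with h | h
  · simp [Int.natAbs_eq_zero.mp h]
  · exfalso
    rw [Int.natAbs_mul] at hb
    simp only [Int.natAbs_natCast] at hb
    nlinarith

lemma not_dvd_of_ne {K : ℕ} {d : ℤ} (h0 : d ≠ 0) (hb : d.natAbs ≤ 2 * K) :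
    ¬ ((2 * K + 1 : ℕ) : ℤ) ∣ d := fun hdvd => h0 (dvd_small_eq_zero hdvd hb)

lemma ee_split (K : ℕ) (r : ℤ × ℤ) (m : Fin (2 * K + 1) × Fin (2 * K + 1)) :
    ee K r m = Complex.exp (2 * Real.pi * Complex.I * r.1 * ((m.1 : ℕ) : ℂ) / ((2 * K + 1 : ℕ) : ℂ))
      * Complex.exp (2 * Real.pi * Complex.I * r.2 * ((m.2 : ℕ) : ℂ) / ((2 * K + 1 : ℕ) : ℂ)) := by
  rw [ee, ← Complex.exp_add]
  congr 1
  push_cast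
  ring

lemma sum_ee_grid (K : ℕ) (r : ℤ × ℤ) :
    ∑ m : Fin (2 * K + 1) × Fin (2 * K + 1), ee K r m
      = (if ((2 * K + 1 : ℕ) : ℤ) ∣ r.1 then ((2 * K + 1 : ℕ) : ℂ) else 0)
        * (if ((2 * K + 1 : ℕ) : ℤ) ∣ r.2 then ((2 * K + 1 : ℕ) : ℂ) else 0) := by
  have hn : 0 < 2 * K + 1 := by omega
  rw [← geom_range _ hn r.1, ← geom_range _ hn r.2]
  rw [Fintype.sum_prod_type]
  simp only [ee_split]
  rw [← Finset.sum_mul_sum]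
  rw [← Fin.sum_univ_eq_sum_range (fun j : ℕ =>
        Complex.exp (2 * Real.pi * Complex.I * r.1 * j / ((2 * K + 1 : ℕ) : ℂ)))]
  rw [← Fin.sum_univ_eq_sum_range (fun j : ℕ =>
        Complex.exp (2 * Real.pi * Complex.I * r.2 * j / ((2 * K + 1 : ℕ) : ℂ)))]

lemma sum_ee_of_ne_zero (K : ℕ) (r : ℤ × ℤ) (hb1 : r.1.natAbs ≤ 2 * K)
    (hb2 : r.2.natAbs ≤ 2 * K) (h0 : r ≠ (0, 0)) :
    ∑ m : Fin (2 * K + 1) × Fin (2 * K + 1), ee K r m = 0 := by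
  rw [sum_ee_grid]
  by_cases h1 : r.1 = 0
  · have h2 : r.2 ≠ 0 := by
      intro h2
      exact h0 (Prod.ext h1 h2)
    rw [if_neg (not_dvd_of_ne h2 hb2), mul_zero]
  · rw [if_neg (not_dvd_of_ne h1 hb1), zero_mul]

lemma sum_ee_zero_freq (K : ℕ) (r : ℤ × ℤ) (hr : r ∈ freqs K) :
    ∑ m : Fin (2 * K + 1) × Fin (2 * K + 1), ee K r m = 0 := by
  rw [freqs, Finset.mem_erase, Finset.mem_product, Finset.mem_Icc, Finset.mem_Icc] at hr
  exact sum_ee_of_ne_zero K r (by omega) (by omega) hr.1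

lemma mem_freqs_bounds {K : ℕ} {r : ℤ × ℤ} (hr : r ∈ freqs K) :
    r ≠ (0, 0) ∧ -(K : ℤ) ≤ r.1 ∧ r.1 ≤ K ∧ -(K : ℤ) ≤ r.2 ∧ r.2 ≤ K := by
  rw [freqs, Finset.mem_erase, Finset.mem_product, Finset.mem_Icc, Finset.mem_Icc] at hr
  exact ⟨hr.1, hr.2.1.1, hr.2.1.2, hr.2.2.1, hr.2.2.2⟩

lemma neg_mem_freqs {K : ℕ} {r : ℤ × ℤ} (hr : r ∈ freqs K) : -r ∈ freqs K := by
  rw [freqs, Finset.mem_erase, Finset.mem_product, Finset.mem_Icc, Finset.mem_Icc] at hr ⊢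
  obtain ⟨h0, ⟨⟨a1, a2⟩, b1, b2⟩⟩ := hr
  refine ⟨?_, ⟨⟨?_, ?_⟩, ?_, ?_⟩⟩
  · intro h
    apply h0
    have : r = -(0, 0) := by rw [← h]; simp
    simpa using this
  all_goals simp only [Prod.fst_neg, Prod.snd_neg]
  all_goals omega

def box (K : ℕ) : Finset (ℤ × ℤ) :=
  Finset.Icc (-(K : ℤ)) K ×ˢ Finset.Icc (-(K : ℤ)) K

lemma freqs_eq (K : ℕ) : freqs K = (box K).erase (0, 0) := rfl

lemma D1_apply (K : ℕ) (L : ℝ) (w : GridFn K) (m) :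
    D1 K L w m = ∑ r ∈ box K,
      (2 * Real.pi * Complex.I * (r.1 : ℂ) / (L : ℂ)) * dft K w r * ee K r m := rfl

lemma D2_apply (K : ℕ) (L : ℝ) (w : GridFn K) (m) :
    D2 K L w m = ∑ r ∈ box K,
      (2 * Real.pi * Complex.I * (r.2 : ℂ) / (L : ℂ)) * dft K w r * ee K r m := rfl

lemma mem_box {K : ℕ} {r : ℤ × ℤ} :
    r ∈ box K ↔ -(K : ℤ) ≤ r.1 ∧ r.1 ≤ K ∧ -(K : ℤ) ≤ r.2 ∧ r.2 ≤ K := by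
  rw [box, Finset.mem_product, Finset.mem_Icc, Finset.mem_Icc]
  tauto

lemma zero_mem_box (K : ℕ) : ((0, 0) : ℤ × ℤ) ∈ box K := by
  rw [mem_box]
  refine ⟨by simp, by simp, by simp, by simp⟩

lemma ee_mul (K : ℕ) (r r' : ℤ × ℤ) (m) :
    ee K r m * ee K r' m = ee K (r + r') m := by
  rw [ee, ee, ee, ← Complex.exp_add]
  congr 1
  simp only [Prod.fst_add, Prod.snd_add]
  push_cast
  ring

lemma ee_zero (K : ℕ) (m) : ee K ((0, 0) : ℤ × ℤ) m = 1 := by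
  simp [ee]

lemma conj_ee (K : ℕ) (r : ℤ × ℤ) (m) :
    (starRingEnd ℂ) (ee K r m) = ee K (-r) m := by
  rw [ee, ee, ← Complex.exp_conj]
  congr 1
  simp only [map_div₀, map_mul, map_add, Complex.conj_I, Complex.conj_ofReal,
    map_ofNat, map_one, Complex.conj_natCast, map_intCast,
    Prod.fst_neg, Prod.snd_neg]
  push_cast
  ring

lemma sum_box_ee_pair (K : ℕ) (m s : Fin (2 * K + 1) × Fin (2 * K + 1)) :
    ∑ r ∈ box K, ee K r m * ee K (-r) s
      = if s = m then ((2 * K + 1 : ℕ) : ℂ) ^ 2 else 0 := by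
  have hsplit : ∀ r : ℤ × ℤ, ee K r m * ee K (-r) s
      = Complex.exp (2 * Real.pi * Complex.I * r.1 *
          ((((m.1 : ℕ) : ℤ) - ((s.1 : ℕ) : ℤ) : ℤ) : ℂ) / ((2 * K + 1 : ℕ) : ℂ))
        * Complex.exp (2 * Real.pi * Complex.I * r.2 *
          ((((m.2 : ℕ) : ℤ) - ((s.2 : ℕ) : ℤ) : ℤ) : ℂ) / ((2 * K + 1 : ℕ) : ℂ)) := by
    intro r
    rw [ee, ee, ← Complex.exp_add, ← Complex.exp_add]
    congr 1
    simp only [Prod.fst_neg, Prod.snd_neg]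
    push_cast
    ring
  simp only [hsplit]
  rw [box, Finset.sum_product]
  dsimp only
  rw [← Finset.sum_mul_sum]
  rw [geom_Icc K _, geom_Icc K _]
  have hb1 : (((m.1 : ℕ) : ℤ) - ((s.1 : ℕ) : ℤ)).natAbs ≤ 2 * K := by
    have := natAbs_le_of_lt m.1.isLt s.1.isLt
    omega
  have hb2 : (((m.2 : ℕ) : ℤ) - ((s.2 : ℕ) : ℤ)).natAbs ≤ 2 * K := by
    have := natAbs_le_of_lt m.2.isLt s.2.isLt
    omega
  by_cases h : s = m
  · subst h
    simp only [sub_self, dvd_zero, if_pos, if_true]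
    ring
  · rw [if_neg h]
    have hcomp : s.1 ≠ m.1 ∨ s.2 ≠ m.2 := by
      by_contra hc
      push_neg at hc
      exact h (Prod.ext hc.1 hc.2)
    rcases hcomp with h1 | h2
    · have hd : (((m.1 : ℕ) : ℤ) - ((s.1 : ℕ) : ℤ)) ≠ 0 := by
        intro hd
        apply h1
        have : (m.1 : ℕ) = (s.1 : ℕ) := by omega
        exact (Fin.val_injective this).symm
      rw [if_neg (not_dvd_of_ne hd hb1), zero_mul]
    · have hd : (((m.2 : ℕ) : ℤ) - ((s.2 : ℕ) : ℤ)) ≠ 0 := by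
        intro hd
        apply h2
        have : (m.2 : ℕ) = (s.2 : ℕ) := by omega
        exact (Fin.val_injective this).symm
      rw [if_neg (not_dvd_of_ne hd hb2), mul_zero]

lemma inversion (K : ℕ) (u : GridFn K) (m) :
    ∑ r ∈ box K, dft K u r * ee K r m = u m := by
  have hc : ((2 * K + 1 : ℕ) : ℂ) = (2 * (K : ℂ) + 1) := by push_cast; ring
  have hn0 : ((2 * K + 1 : ℕ) : ℂ) ≠ 0 := Nat.cast_ne_zero.mpr (by omega)
  have hn' : (2 * (K : ℂ) + 1) ≠ 0 := by rw [← hc]; exact hn0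
  simp only [dft_eq]
  have h1 : ∀ r ∈ box K,
      ((2 * (K : ℂ) + 1) ^ 2)⁻¹ * (∑ s, u s * ee K (-r) s) * ee K r m
        = ∑ s, ((2 * (K : ℂ) + 1) ^ 2)⁻¹ * u s * (ee K r m * ee K (-r) s) := by
    intro r _
    rw [Finset.mul_sum, Finset.sum_mul]
    refine Finset.sum_congr rfl fun s _ => ?_
    ring
  rw [Finset.sum_congr rfl h1, Finset.sum_comm]
  have h2 : ∀ s, ∑ r ∈ box K, ((2 * (K : ℂ) + 1) ^ 2)⁻¹ * u s * (ee K r m * ee K (-r) s)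
      = ((2 * (K : ℂ) + 1) ^ 2)⁻¹ * u s * (if s = m then ((2 * K + 1 : ℕ) : ℂ) ^ 2 else 0) := by
    intro s
    rw [← Finset.mul_sum, sum_box_ee_pair]
  rw [Finset.sum_congr rfl fun s _ => h2 s]
  simp only [mul_ite, mul_zero]
  rw [Finset.sum_ite_eq' Finset.univ m]
  rw [if_pos (Finset.mem_univ m), hc]
  field_simp

lemma sum_mul_ee_neg (K : ℕ) (w : GridFn K) (r : ℤ × ℤ) :
    ∑ s, w s * ee K (-r) s = (2 * (K : ℂ) + 1) ^ 2 * dft K w r := by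
  have hc : ((2 * K + 1 : ℕ) : ℂ) = (2 * (K : ℂ) + 1) := by push_cast; ring
  have hn0 : ((2 * K + 1 : ℕ) : ℂ) ≠ 0 := Nat.cast_ne_zero.mpr (by omega)
  have hn' : (2 * (K : ℂ) + 1) ≠ 0 := by rw [← hc]; exact hn0
  rw [dft_eq, ← mul_assoc, mul_inv_cancel₀ (pow_ne_zero 2 hn'), one_mul]

lemma dft_add_smul (K : ℕ) (u w : GridFn K) (c : ℂ) (r : ℤ × ℤ) :
    dft K (fun m => u m + c * w m) r = dft K u r + c * dft K w r := by
  simp only [dft_eq]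
  have : ∑ s, (u s + c * w s) * ee K (-r) s
      = (∑ s, u s * ee K (-r) s) + c * ∑ s, w s * ee K (-r) s := by
    rw [Finset.mul_sum, ← Finset.sum_add_distrib]
    refine Finset.sum_congr rfl fun s _ => ?_
    ring
  rw [this]
  ring

lemma dft_smul (K : ℕ) (w : GridFn K) (c : ℂ) (r : ℤ × ℤ) :
    dft K (fun m => c * w m) r = c * dft K w r := by
  simp only [dft_eq]
  have : ∑ s, (c * w s) * ee K (-r) s = c * ∑ s, w s * ee K (-r) s := by
    rw [Finset.mul_sum]
    refine Finset.sum_congr rfl fun s _ => ?_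
    ring
  rw [this]
  ring

lemma sum_op_add_smul (K : ℕ) (A : Finset (ℤ × ℤ)) (coef : ℤ × ℤ → ℂ)
    (u w : GridFn K) (c : ℂ) (m) :
    ∑ r ∈ A, coef r * dft K (fun m' => u m' + c * w m') r * ee K r m
      = (∑ r ∈ A, coef r * dft K u r * ee K r m)
        + c * ∑ r ∈ A, coef r * dft K w r * ee K r m := by
  simp only [dft_add_smul, Finset.mul_sum, ← Finset.sum_add_distrib]
  refine Finset.sum_congr rfl fun r _ => ?_
  ring

lemma specOp_add_smul (K : ℕ) (L : ℝ) (α : ℤ) (u w : GridFn K) (c : ℂ) (m) :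
    specOp K L α (fun m' => u m' + c * w m') m = specOp K L α u m + c * specOp K L α w m := by
  rw [specOp_apply, specOp_apply, specOp_apply, sum_op_add_smul]

lemma specOp_smul (K : ℕ) (L : ℝ) (α : ℤ) (w : GridFn K) (c : ℂ) (m) :
    specOp K L α (fun m' => c * w m') m = c * specOp K L α w m := by
  rw [specOp_apply, specOp_apply, Finset.mul_sum]
  refine Finset.sum_congr rfl fun r _ => ?_
  rw [dft_smul]
  ring

lemma D1_add_smul (K : ℕ) (L : ℝ) (u w : GridFn K) (c : ℂ) (m) :
    D1 K L (fun m' => u m' + c * w m') m = D1 K L u m + c * D1 K L w m := by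
  rw [D1_apply, D1_apply, D1_apply, sum_op_add_smul]

lemma D2_add_smul (K : ℕ) (L : ℝ) (u w : GridFn K) (c : ℂ) (m) :
    D2 K L (fun m' => u m' + c * w m') m = D2 K L u m + c * D2 K L w m := by
  rw [D2_apply, D2_apply, D2_apply, sum_op_add_smul]

lemma lapN_add_smul (K : ℕ) (L : ℝ) (u w : GridFn K) (c : ℂ) (m) :
    lapN K L (fun m' => u m' + c * w m') m = lapN K L u m + c * lapN K L w m := by
  rw [lapN, lapN, lapN, specOp_add_smul]
  ring

/-- Unscaled discrete inner product. -/
def ip (K : ℕ) (u w : GridFn K) : ℂ := ∑ s, u s * (starRingEnd ℂ) (w s)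

lemma ipN_eq (K : ℕ) (L : ℝ) (u w : GridFn K) :
    ipN K L u w = (((L / (2 * K + 1)) ^ 2 : ℝ) : ℂ) * ip K u w := rfl

lemma conj_nsq (K : ℕ) : (starRingEnd ℂ) ((2 * (K : ℂ) + 1) ^ 2) = (2 * (K : ℂ) + 1) ^ 2 := by
  simp [map_pow, map_add, map_mul, map_ofNat, map_one, Complex.conj_natCast]

lemma lam_pos {L : ℝ} (hL : 0 < L) {K : ℕ} {r : ℤ × ℤ} (hr : r ∈ freqs K) : 0 < lam L r := by
  obtain ⟨h0, -⟩ := mem_freqs_bounds hr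
  have hs : 0 < (r.1 : ℝ) ^ 2 + (r.2 : ℝ) ^ 2 := by
    by_cases h1 : r.1 = 0
    · have h2 : r.2 ≠ 0 := fun h2 => h0 (Prod.ext h1 h2)
      have : (r.2 : ℝ) ≠ 0 := Int.cast_ne_zero.mpr h2
      positivity
    · have : (r.1 : ℝ) ≠ 0 := Int.cast_ne_zero.mpr h1
      positivity
  rw [lam]
  positivity

lemma lamC_ne {L : ℝ} (hL : 0 < L) {K : ℕ} {r : ℤ × ℤ} (hr : r ∈ freqs K) :
    ((lam L r : ℝ) : ℂ) ≠ 0 :=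
  Complex.ofReal_ne_zero.mpr (lam_pos hL hr).ne'

lemma conj_lam_zpow (L : ℝ) (α : ℤ) (r : ℤ × ℤ) :
    (starRingEnd ℂ) (((lam L r : ℝ) : ℂ) ^ α) = ((lam L r : ℝ) : ℂ) ^ α := by
  rw [map_zpow₀, Complex.conj_ofReal]

lemma sum_ee_addneg {K : ℕ} {r r' : ℤ × ℤ} (hr : r ∈ box K) (hr' : r' ∈ box K) :
    ∑ m : Fin (2 * K + 1) × Fin (2 * K + 1), ee K (r + -r') m
      = if r = r' then ((2 * K + 1 : ℕ) : ℂ) ^ 2 else 0 := by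
  rw [mem_box] at hr hr'
  by_cases h : r = r'
  · have h0 : r + -r' = ((0, 0) : ℤ × ℤ) := by
      subst h
      simp [Prod.ext_iff]
    rw [if_pos h, h0, sum_ee_grid]
    simp only [dvd_zero, if_pos, if_true]
    ring
  · rw [if_neg h]
    apply sum_ee_of_ne_zero
    · simp only [Prod.fst_add, Prod.fst_neg]
      omega
    · simp only [Prod.snd_add, Prod.snd_neg]
      omega
    · intro hc
      apply h
      rw [Prod.ext_iff] at hc ⊢
      simp only [Prod.fst_add, Prod.fst_neg, Prod.snd_add, Prod.snd_neg] at hc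
      obtain ⟨hc1, hc2⟩ := hc
      constructor <;> omega

/-- Central double-sum orthogonality computation. -/
lemma ip_sumform {K : ℕ} {A B : Finset (ℤ × ℤ)} (hA : A ⊆ box K) (hB : B ⊆ box K)
    (f g : ℤ × ℤ → ℂ) :
    ∑ s : Fin (2 * K + 1) × Fin (2 * K + 1),
        (∑ r ∈ A, f r * ee K r s) * (starRingEnd ℂ) (∑ r' ∈ B, g r' * ee K r' s)
      = (2 * (K : ℂ) + 1) ^ 2 * ∑ r ∈ A ∩ B, f r * (starRingEnd ℂ) (g r) := by
  have hc : ((2 * K + 1 : ℕ) : ℂ) = (2 * (K : ℂ) + 1) := by push_cast; ring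
  have step : ∀ s, (∑ r ∈ A, f r * ee K r s) * (starRingEnd ℂ) (∑ r' ∈ B, g r' * ee K r' s)
      = ∑ r ∈ A, ∑ r' ∈ B, (f r * (starRingEnd ℂ) (g r')) * ee K (r + -r') s := by
    intro s
    rw [map_sum, Finset.sum_mul_sum]
    refine Finset.sum_congr rfl fun r _ => Finset.sum_congr rfl fun r' _ => ?_
    rw [map_mul, conj_ee, ← ee_mul]
    ring
  simp only [step]
  rw [Finset.sum_comm]
  have step2 : ∀ r ∈ A, ∑ s : Fin (2 * K + 1) × Fin (2 * K + 1),
        ∑ r' ∈ B, (f r * (starRingEnd ℂ) (g r')) * ee K (r + -r') s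
      = if r ∈ B then ((2 * K + 1 : ℕ) : ℂ) ^ 2 * (f r * (starRingEnd ℂ) (g r)) else 0 := by
    intro r hrA
    rw [Finset.sum_comm]
    have : ∀ r' ∈ B, ∑ s : Fin (2 * K + 1) × Fin (2 * K + 1),
          (f r * (starRingEnd ℂ) (g r')) * ee K (r + -r') s
        = if r = r' then ((2 * K + 1 : ℕ) : ℂ) ^ 2 * (f r * (starRingEnd ℂ) (g r')) else 0 := by
      intro r' hr'B
      rw [← Finset.mul_sum, sum_ee_addneg (hA hrA) (hB hr'B)]
      split
      · ring
      · ring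
    rw [Finset.sum_congr rfl this]
    have heq : ∀ r' ∈ B, (if r = r' then ((2 * K + 1 : ℕ) : ℂ) ^ 2 * (f r * (starRingEnd ℂ) (g r')) else 0)
        = (if r = r' then ((2 * K + 1 : ℕ) : ℂ) ^ 2 * (f r * (starRingEnd ℂ) (g r)) else 0) := by
      intro r' _
      split
      · next h => rw [h]
      · rfl
    rw [Finset.sum_congr rfl heq, Finset.sum_ite_eq]
  rw [Finset.sum_congr rfl step2]
  rw [Finset.sum_ite_mem]
  rw [Finset.mul_sum]
  refine Finset.sum_congr rfl fun r _ => ?_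
  rw [hc]

lemma ip_specOp_left (K : ℕ) (L : ℝ) (α : ℤ) (u w : GridFn K) :
    ip K (specOp K L α u) w
      = (2 * (K : ℂ) + 1) ^ 2 * ∑ r ∈ freqs K,
          ((lam L r : ℝ) : ℂ) ^ α * dft K u r * (starRingEnd ℂ) (dft K w r) := by
  rw [ip]
  have hkey : ∀ r, ∑ s, ee K r s * (starRingEnd ℂ) (w s)
      = (2 * (K : ℂ) + 1) ^ 2 * (starRingEnd ℂ) (dft K w r) := by
    intro r
    have : ∀ s, ee K r s * (starRingEnd ℂ) (w s) = (starRingEnd ℂ) (w s * ee K (-r) s) := by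
      intro s
      rw [map_mul, conj_ee, neg_neg]
      ring
    simp only [this]
    rw [← map_sum, sum_mul_ee_neg, map_mul, conj_nsq]
  simp only [specOp_apply, Finset.sum_mul]
  rw [Finset.sum_comm, Finset.mul_sum]
  refine Finset.sum_congr rfl fun r _ => ?_
  have : ∀ s, ((lam L r : ℝ) : ℂ) ^ α * dft K u r * ee K r s * (starRingEnd ℂ) (w s)
      = ((lam L r : ℝ) : ℂ) ^ α * dft K u r * (ee K r s * (starRingEnd ℂ) (w s)) := by
    intro s
    ring
  simp only [this]
  rw [← Finset.mul_sum, hkey r]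
  ring

lemma ip_specOp_right (K : ℕ) (L : ℝ) (α : ℤ) (u w : GridFn K) :
    ip K u (specOp K L α w)
      = (2 * (K : ℂ) + 1) ^ 2 * ∑ r ∈ freqs K,
          ((lam L r : ℝ) : ℂ) ^ α * dft K u r * (starRingEnd ℂ) (dft K w r) := by
  rw [ip]
  have step : ∀ s, u s * (starRingEnd ℂ) (specOp K L α w s)
      = ∑ r ∈ freqs K, (((lam L r : ℝ) : ℂ) ^ α * (starRingEnd ℂ) (dft K w r)) * (u s * ee K (-r) s) := by
    intro s
    rw [specOp_apply, map_sum, Finset.mul_sum]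
    refine Finset.sum_congr rfl fun r _ => ?_
    rw [map_mul, map_mul, conj_ee, conj_lam_zpow]
    ring
  simp only [step]
  rw [Finset.sum_comm, Finset.mul_sum]
  refine Finset.sum_congr rfl fun r _ => ?_
  rw [← Finset.mul_sum, sum_mul_ee_neg]
  ring

lemma ip_selfadj (K : ℕ) (L : ℝ) (α : ℤ) (u w : GridFn K) :
    ip K (specOp K L α u) w = ip K u (specOp K L α w) := by
  rw [ip_specOp_left, ip_specOp_right]

lemma freqs_subset_box (K : ℕ) : freqs K ⊆ box K := by
  rw [freqs_eq]
  exact Finset.erase_subset _ _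

lemma ip_grad (K : ℕ) (L : ℝ) (hL : 0 < L) (u w : GridFn K) :
    ip K (D1 K L u) (D1 K L w) + ip K (D2 K L u) (D2 K L w)
      = ip K (specOp K L 1 u) w := by
  rw [ip, ip]
  simp only [D1_apply, D2_apply]
  rw [ip_sumform (le_refl _) (le_refl _), ip_sumform (le_refl _) (le_refl _),
    ip_specOp_left, Finset.inter_self]
  rw [← mul_add, ← Finset.sum_add_distrib]
  rw [freqs_eq, ← Finset.sum_erase (box K) (a := ((0,0) : ℤ × ℤ)) ?h0]
  case h0 =>
    simp [dft]
  refine congrArg _ (Finset.sum_congr rfl fun r hr => ?_)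
  simp only [map_mul, Complex.conj_I, Complex.conj_ofReal, map_div₀, map_ofNat,
    map_intCast]
  rw [zpow_one]
  have hlam : ((lam L r : ℝ) : ℂ) = 4 * (Real.pi : ℂ) ^ 2 * ((r.1 : ℂ) ^ 2 + (r.2 : ℂ) ^ 2) / (L : ℂ) ^ 2 := by
    rw [lam]
    push_cast
    ring
  rw [hlam]
  linear_combination (-(4 * (Real.pi : ℂ) ^ 2 * ((r.1 : ℂ) ^ 2 + (r.2 : ℂ) ^ 2) / (L : ℂ) ^ 2)
    * dft K u r * (starRingEnd ℂ) (dft K w r)) * Complex.I_sq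

lemma ip_bilap (K : ℕ) (L : ℝ) (u w : GridFn K) :
    ip K (specOp K L 1 u) (specOp K L 1 w) = ip K (specOp K L 2 u) w := by
  rw [ip]
  simp only [specOp_apply]
  rw [ip_sumform (freqs_subset_box K) (freqs_subset_box K), ip_specOp_left, Finset.inter_self]
  refine congrArg _ (Finset.sum_congr rfl fun r hr => ?_)
  rw [map_mul, conj_lam_zpow]
  simp only [zpow_one, zpow_two]
  ring

lemma dft_specOp {K : ℕ} (L : ℝ) (α : ℤ) (u : GridFn K) {r' : ℤ × ℤ} (hr' : r' ∈ freqs K) :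
    dft K (specOp K L α u) r' = ((lam L r' : ℝ) : ℂ) ^ α * dft K u r' := by
  have hc : ((2 * K + 1 : ℕ) : ℂ) = (2 * (K : ℂ) + 1) := by push_cast; ring
  have hn0 : ((2 * K + 1 : ℕ) : ℂ) ≠ 0 := Nat.cast_ne_zero.mpr (by omega)
  have hn' : (2 * (K : ℂ) + 1) ≠ 0 := by rw [← hc]; exact hn0
  rw [dft_eq]
  have step : ∑ s, specOp K L α u s * ee K (-r') s
      = ∑ r ∈ freqs K, (((lam L r : ℝ) : ℂ) ^ α * dft K u r) * ∑ s, ee K (r + -r') s := by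
    simp only [specOp_apply, Finset.sum_mul]
    rw [Finset.sum_comm]
    refine Finset.sum_congr rfl fun r _ => ?_
    rw [Finset.mul_sum]
    refine Finset.sum_congr rfl fun s _ => ?_
    rw [← ee_mul]
    ring
  rw [step]
  have step2 : ∀ r ∈ freqs K, (((lam L r : ℝ) : ℂ) ^ α * dft K u r) * ∑ s, ee K (r + -r') s
      = if r = r' then ((2 * K + 1 : ℕ) : ℂ) ^ 2 * (((lam L r : ℝ) : ℂ) ^ α * dft K u r) else 0 := by
    intro r hr
    rw [sum_ee_addneg (freqs_subset_box K hr) (freqs_subset_box K hr')]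
    split
    · ring
    · ring
  rw [Finset.sum_congr rfl step2]
  have step3 : ∀ r ∈ freqs K,
      (if r = r' then ((2 * K + 1 : ℕ) : ℂ) ^ 2 * (((lam L r : ℝ) : ℂ) ^ α * dft K u r) else 0)
        = (if r = r' then ((2 * K + 1 : ℕ) : ℂ) ^ 2 * (((lam L r' : ℝ) : ℂ) ^ α * dft K u r') else 0) := by
    intro r _
    split
    · next h => rw [h]
    · rfl
  rw [Finset.sum_congr rfl step3, Finset.sum_ite_eq', if_pos hr', hc]
  rw [← mul_assoc, inv_mul_cancel₀ (pow_ne_zero 2 hn'), one_mul]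

lemma dft_const (K : ℕ) (c : ℂ) {r : ℤ × ℤ} (hr : r ∈ freqs K) :
    dft K (fun _ => c) r = 0 := by
  rw [dft_eq, ← Finset.mul_sum, sum_ee_zero_freq K (-r) (neg_mem_freqs hr)]
  simp

lemma specOp_const (K : ℕ) (L : ℝ) (α : ℤ) (c : ℂ) (m) :
    specOp K L α (fun _ => c) m = 0 := by
  rw [specOp_apply]
  apply Finset.sum_eq_zero
  intro r hr
  rw [dft_const K c hr]
  ring

lemma specOp_cancel (K : ℕ) {L : ℝ} (hL : 0 < L) (α : ℤ) (u : GridFn K) (m) :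
    specOp K L α (specOp K L (-α) u) m = u m - dft K u (0, 0) := by
  rw [specOp_apply]
  have h1 : ∀ r ∈ freqs K,
      ((lam L r : ℝ) : ℂ) ^ α * dft K (specOp K L (-α) u) r * ee K r m
        = dft K u r * ee K r m := by
    intro r hr
    rw [dft_specOp L (-α) u hr, ← mul_assoc, ← zpow_add₀ (lamC_ne hL hr),
      add_neg_cancel, zpow_zero, one_mul]
  rw [Finset.sum_congr rfl h1, freqs_eq, Finset.sum_erase_eq_sub (zero_mem_box K),
    inversion, ee_zero, mul_one]

lemma conj_dft {K : ℕ} {u : GridFn K} (hu : RealValued u) (r : ℤ × ℤ) :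
    (starRingEnd ℂ) (dft K u r) = dft K u (-r) := by
  rw [dft_eq, dft_eq, map_mul, map_inv₀, map_pow]
  have h1 : (starRingEnd ℂ) (2 * (K : ℂ) + 1) = 2 * (K : ℂ) + 1 := by
    simp [map_add, map_mul, map_ofNat, map_one, Complex.conj_natCast]
  have h2 : (starRingEnd ℂ) (2 * (K : ℝ) + 1 : ℂ) = (2 * (K : ℂ) + 1) := by
    push_cast at h1 ⊢
    exact h1
  rw [map_sum]
  have h3 : ∀ s, (starRingEnd ℂ) (u s * ee K (-r) s) = u s * ee K (-(-r)) s := by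
    intro s
    rw [map_mul, conj_ee]
    congr 1
    exact Complex.conj_eq_iff_im.mpr (hu s)
  simp only [h3, neg_neg]
  congr 1
  rw [show ((2 : ℂ) * (K : ℕ) + 1) = (2 * (K : ℝ) + 1 : ℂ) by push_cast; ring] at h1 ⊢
  rw [h1]

lemma lam_neg (L : ℝ) (r : ℤ × ℤ) : lam L (-r) = lam L r := by
  rw [lam, lam]
  simp only [Prod.fst_neg, Prod.snd_neg]
  push_cast
  ring

lemma sum_freqs_neg (K : ℕ) (F : ℤ × ℤ → ℂ) :
    ∑ r ∈ freqs K, F (-r) = ∑ r ∈ freqs K, F r := by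
  refine Finset.sum_nbij' (fun r => -r) (fun r => -r) ?_ ?_ ?_ ?_ ?_
  · intro r hr
    exact neg_mem_freqs hr
  · intro r hr
    exact neg_mem_freqs hr
  · intro r _
    simp
  · intro r _
    simp
  · intro r _
    rfl

lemma realValued_specOp {K : ℕ} (L : ℝ) (α : ℤ) {u : GridFn K} (hu : RealValued u) :
    RealValued (specOp K L α u) := by
  intro m
  rw [← Complex.conj_eq_iff_im]
  rw [specOp_apply, map_sum]
  have h1 : ∀ r, (starRingEnd ℂ) (((lam L r : ℝ) : ℂ) ^ α * dft K u r * ee K r m)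
      = ((lam L (-r) : ℝ) : ℂ) ^ α * dft K u (-r) * ee K (-r) m := by
    intro r
    rw [map_mul, map_mul, conj_lam_zpow, conj_dft hu, conj_ee, lam_neg]
  simp only [h1]
  exact sum_freqs_neg K (fun r => ((lam L r : ℝ) : ℂ) ^ α * dft K u r * ee K r m)

lemma ip_re_comm (K : ℕ) (u w : GridFn K) : (ip K u w).re = (ip K w u).re := by
  have : ip K u w = (starRingEnd ℂ) (ip K w u) := by
    rw [ip, ip, map_sum]
    refine Finset.sum_congr rfl fun s _ => ?_
    rw [map_mul, Complex.conj_conj]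
    ring
  rw [this, Complex.conj_re]

lemma dft_zero_eq (K : ℕ) (u : GridFn K) :
    dft K u (0, 0) = ((2 * (K : ℂ) + 1) ^ 2)⁻¹ * ∑ s, u s := by
  rw [dft_eq]
  congr 1
  refine Finset.sum_congr rfl fun s _ => ?_
  have : (-(0, 0) : ℤ × ℤ) = (0, 0) := by simp [Prod.ext_iff]
  rw [this, ee_zero, mul_one]

lemma hasDerivAt_quad (c0 c1 c2 : ℝ) :
    HasDerivAt (fun s : ℝ => c0 + s * c1 + s ^ 2 * c2) c1 0 := by
  have h1 : HasDerivAt (fun s : ℝ => s) 1 (0 : ℝ) := hasDerivAt_id 0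
  have h2 := (h1.mul_const c1).const_add c0
  have h3 := (h1.pow 2).mul_const c2
  have h4 := h2.add h3
  exact h4.congr_deriv (by norm_num)

lemma hasDerivAt_quarter_pow4 (A B : ℝ) :
    HasDerivAt (fun s : ℝ => (1/4) * (A + s * B) ^ 4) (A ^ 3 * B) 0 := by
  have h := ((((hasDerivAt_id (0 : ℝ)).mul_const B).const_add A).pow 4).const_mul (1/4 : ℝ)
  exact h.congr_deriv (by norm_num; ring)

lemma hasDerivAt_c_sq (c A B : ℝ) :
    HasDerivAt (fun s : ℝ => c * (A + s * B) ^ 2) (2 * c * A * B) 0 := by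
  have h := ((((hasDerivAt_id (0 : ℝ)).mul_const B).const_add A).pow 2).const_mul c
  exact h.congr_deriv (by norm_num; ring)

lemma hasDerivAt_abs_sq (p q : ℂ) :
    HasDerivAt (fun s : ℝ => ‖p + (s : ℂ) * q‖ ^ 2)
      (2 * (p.re * q.re + p.im * q.im)) 0 := by
  have hfun : (fun s : ℝ => ‖p + (s : ℂ) * q‖ ^ 2)
      = fun s : ℝ => (p.re + s * q.re) ^ 2 + (p.im + s * q.im) ^ 2 := by
    funext s
    rw [Complex.sq_norm, Complex.normSq_apply]
    simp only [Complex.normSq_apply, Complex.add_re, Complex.add_im, Complex.mul_re,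
      Complex.mul_im, Complex.ofReal_re, Complex.ofReal_im]
    ring
  rw [hfun]
  have h1 := (((hasDerivAt_id (0 : ℝ)).mul_const q.re).const_add p.re).pow 2
  have h2 := (((hasDerivAt_id (0 : ℝ)).mul_const q.im).const_add p.im).pow 2
  have h3 := h1.add h2
  exact h3.congr_deriv (by norm_num; ring)

lemma hasDerivAt_half_abs_sq (p q : ℂ) :
    HasDerivAt (fun s : ℝ => (1/2) * ‖p + (s : ℂ) * q‖ ^ 2)
      (p.re * q.re + p.im * q.im) 0 := by
  have h := (hasDerivAt_abs_sq p q).const_mul (1/2 : ℝ)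
  exact h.congr_deriv (by ring)

lemma invNegLapN_def (K : ℕ) (L : ℝ) (u : GridFn K) : invNegLapN K L u = specOp K L (-1) u := rfl

lemma bilapN_def (K : ℕ) (L : ℝ) (u : GridFn K) : bilapN K L u = specOp K L 2 u := rfl

lemma ip_lap_lap (K : ℕ) (L : ℝ) (v w : GridFn K) :
    ip K (lapN K L v) (lapN K L w) = ip K (specOp K L 2 v) w := by
  have h1 : ip K (lapN K L v) (lapN K L w) = ip K (specOp K L 1 v) (specOp K L 1 w) := by
    rw [ip, ip]
    refine Finset.sum_congr rfl fun s _ => ?_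
    show (-(specOp K L 1 v s)) * (starRingEnd ℂ) (-(specOp K L 1 w s)) = _
    rw [map_neg]
    ring
  rw [h1, ip_bilap]

lemma sum_bridge (K : ℕ) {L : ℝ} (hL : 0 < L) (ε : ℝ) (v w : GridFn K) :
    ∑ m, ((v m) ^ 3 * (starRingEnd ℂ) (w m)
        + ((1 - ε : ℝ) : ℂ) * v m * (starRingEnd ℂ) (w m)
        - 2 * (D1 K L v m * (starRingEnd ℂ) (D1 K L w m)
            + D2 K L v m * (starRingEnd ℂ) (D2 K L w m))
        + lapN K L v m * (starRingEnd ℂ) (lapN K L w m))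
      = ip K (muN K L ε v) w := by
  have e1 : ∑ m, ((v m) ^ 3 * (starRingEnd ℂ) (w m)
        + ((1 - ε : ℝ) : ℂ) * v m * (starRingEnd ℂ) (w m)
        - 2 * (D1 K L v m * (starRingEnd ℂ) (D1 K L w m)
            + D2 K L v m * (starRingEnd ℂ) (D2 K L w m))
        + lapN K L v m * (starRingEnd ℂ) (lapN K L w m))
      = (∑ m, ((v m) ^ 3 * (starRingEnd ℂ) (w m)
          + ((1 - ε : ℝ) : ℂ) * v m * (starRingEnd ℂ) (w m)))
        - 2 * (ip K (D1 K L v) (D1 K L w) + ip K (D2 K L v) (D2 K L w))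
        + ip K (lapN K L v) (lapN K L w) := by
    rw [ip, ip, ip, ← Finset.sum_add_distrib, Finset.mul_sum, ← Finset.sum_sub_distrib,
      ← Finset.sum_add_distrib]
  rw [e1, ip_grad K L hL, ip_lap_lap]
  rw [ip, ip, ip, Finset.mul_sum, ← Finset.sum_sub_distrib, ← Finset.sum_add_distrib]
  refine Finset.sum_congr rfl fun m _ => ?_
  simp only [muN, lapN, bilapN_def]
  ring

lemma re_cube_mul_conj {x y : ℂ} (hx : x.im = 0) (hy : y.im = 0) :
    (x ^ 3 * (starRingEnd ℂ) y).re = x.re ^ 3 * y.re := by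
  have hx' : x = (x.re : ℂ) := Complex.ext rfl (by simp [hx])
  have hy' : y = (y.re : ℂ) := Complex.ext rfl (by simp [hy])
  rw [hx', hy']
  simp [Complex.conj_ofReal, ← Complex.ofReal_pow, ← Complex.ofReal_mul, Complex.ofReal_re]

lemma re_const_mul_mul_conj (t : ℝ) {x y : ℂ} (hx : x.im = 0) (hy : y.im = 0) :
    (((t : ℝ) : ℂ) * x * (starRingEnd ℂ) y).re = t * (x.re * y.re) := by
  have hx' : x = (x.re : ℂ) := Complex.ext rfl (by simp [hx])
  have hy' : y = (y.re : ℂ) := Complex.ext rfl (by simp [hy])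
  rw [hx', hy']
  simp [Complex.conj_ofReal, ← Complex.ofReal_mul, Complex.ofReal_re, mul_assoc]

lemma re_mul_conj (p q : ℂ) :
    (p * (starRingEnd ℂ) q).re = p.re * q.re + p.im * q.im := by
  simp only [Complex.mul_re, Complex.conj_re, Complex.conj_im]
  ring

lemma re_two_mul (z : ℂ) : ((2 : ℂ) * z).re = 2 * z.re := by
  rw [show (2 : ℂ) = ((2 : ℝ) : ℂ) by norm_num, Complex.re_ofReal_mul]

lemma hasDerivAt_EN (K : ℕ) {L : ℝ} (hL : 0 < L) (ε : ℝ) (v w : GridFn K)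
    (hv : RealValued v) (hw : RealValued w) :
    HasDerivAt (fun s : ℝ => EN K L ε (fun m => v m + (s : ℂ) * w m))
      ((L / (2 * K + 1)) ^ 2 * (ip K (muN K L ε v) w).re) 0 := by
  have hfun : (fun s : ℝ => EN K L ε (fun m => v m + (s : ℂ) * w m))
      = fun s : ℝ => (L / (2 * K + 1)) ^ 2 * ∑ m,
          ((1/4) * ((v m).re + s * (w m).re) ^ 4
            + ((1 - ε)/2) * ((v m).re + s * (w m).re) ^ 2
            - (‖D1 K L v m + (s : ℂ) * D1 K L w m‖ ^ 2
               + ‖D2 K L v m + (s : ℂ) * D2 K L w m‖ ^ 2)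
            + (1/2) * ‖lapN K L v m + (s : ℂ) * lapN K L w m‖ ^ 2) := by
    funext s
    simp only [EN, gradSqN]
    congr 1
    refine Finset.sum_congr rfl fun m _ => ?_
    rw [D1_add_smul, D2_add_smul, lapN_add_smul]
    have hre : (v m + (s : ℂ) * w m).re = (v m).re + s * (w m).re := by
      simp [Complex.add_re, Complex.mul_re, Complex.ofReal_re, Complex.ofReal_im]
    rw [hre]
  rw [hfun]
  have hm : ∀ m ∈ (Finset.univ : Finset (Fin (2 * K + 1) × Fin (2 * K + 1))),
      HasDerivAt (fun s : ℝ =>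
          (1/4) * ((v m).re + s * (w m).re) ^ 4
            + ((1 - ε)/2) * ((v m).re + s * (w m).re) ^ 2
            - (‖D1 K L v m + (s : ℂ) * D1 K L w m‖ ^ 2
               + ‖D2 K L v m + (s : ℂ) * D2 K L w m‖ ^ 2)
            + (1/2) * ‖lapN K L v m + (s : ℂ) * lapN K L w m‖ ^ 2)
        ((v m).re ^ 3 * (w m).re + 2 * ((1 - ε)/2) * (v m).re * (w m).re
          - (2 * ((D1 K L v m).re * (D1 K L w m).re + (D1 K L v m).im * (D1 K L w m).im)
             + 2 * ((D2 K L v m).re * (D2 K L w m).re + (D2 K L v m).im * (D2 K L w m).im))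
          + ((lapN K L v m).re * (lapN K L w m).re + (lapN K L v m).im * (lapN K L w m).im)) 0 :=
    fun m _ =>
      (((hasDerivAt_quarter_pow4 _ _).add (hasDerivAt_c_sq _ _ _)).sub
        ((hasDerivAt_abs_sq _ _).add (hasDerivAt_abs_sq _ _))).add
        (hasDerivAt_half_abs_sq _ _)
  have h := (HasDerivAt.fun_sum hm).const_mul ((L / (2 * K + 1)) ^ 2 : ℝ)
  refine h.congr_deriv ?_
  congr 1
  rw [← sum_bridge K hL ε v w, Complex.re_sum]
  refine Finset.sum_congr rfl fun m _ => ?_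
  rw [Complex.add_re, Complex.sub_re, Complex.add_re,
    re_cube_mul_conj (hv m) (hw m), re_const_mul_mul_conj (1 - ε) (hv m) (hw m),
    re_two_mul, Complex.add_re, re_mul_conj, re_mul_conj, re_mul_conj]
  ring

lemma hasDerivAt_F1 (K : ℕ) (L M a b c : ℝ) (hM : 0 < M) (ha : 0 < a)
    (u1 u0 v w : GridFn K) :
    HasDerivAt (fun s : ℝ => (1/(2*M*a)) * negNormSq K L
        (fun m => (a:ℂ) * (v m + (s:ℂ) * w m) + (b:ℂ) * u1 m + (c:ℂ) * u0 m))
      ((L / (2*K+1))^2 * ((1/M) * (ip K (invNegLapN K L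
        (fun m => (a:ℂ) * v m + (b:ℂ) * u1 m + (c:ℂ) * u0 m)) w).re)) 0 := by
  classical
  set Zf : GridFn K := fun m => (a:ℂ) * v m + (b:ℂ) * u1 m + (c:ℂ) * u0 m with hZf
  set P : GridFn K := specOp K L (-1) Zf with hP
  set Q : GridFn K := specOp K L (-1) w with hQ
  have key : ∀ s : ℝ,
      negNormSq K L (fun m => (a:ℂ)*(v m + (s:ℂ)*w m) + (b:ℂ)*u1 m + (c:ℂ)*u0 m)
      = (L/(2*K+1))^2 * ((ip K P Zf).re + s * (a * ((ip K Q Zf).re + (ip K P w).re))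
          + s^2 * (a^2 * (ip K Q w).re)) := by
    intro s
    have harg : (fun m => (a:ℂ)*(v m + (s:ℂ)*w m) + (b:ℂ)*u1 m + (c:ℂ)*u0 m)
        = fun m => Zf m + ((s*a : ℝ) : ℂ) * w m := by
      funext m
      simp only [hZf]
      push_cast
      ring
    rw [harg, negNormSq]
    have hinv : invNegLapN K L (fun m => Zf m + ((s*a:ℝ):ℂ) * w m)
        = fun m => P m + ((s*a:ℝ):ℂ) * Q m := by
      funext m
      rw [invNegLapN_def, specOp_add_smul, hP, hQ]
    rw [hinv]
    simp only [ipN]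
    have hexp : ∑ m, (P m + ((s*a:ℝ):ℂ) * Q m) * (starRingEnd ℂ) (Zf m + ((s*a:ℝ):ℂ) * w m)
        = ip K P Zf + ((s*a:ℝ):ℂ) * (ip K Q Zf + ip K P w)
          + (((s*a)^2 : ℝ):ℂ) * ip K Q w := by
      rw [ip, ip, ip, ip]
      rw [← Finset.sum_add_distrib, Finset.mul_sum, Finset.mul_sum,
        ← Finset.sum_add_distrib, ← Finset.sum_add_distrib]
      refine Finset.sum_congr rfl fun m _ => ?_
      rw [map_add, map_mul, Complex.conj_ofReal]
      push_cast
      ring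
    rw [hexp]
    rw [Complex.re_ofReal_mul, Complex.add_re, Complex.add_re, Complex.re_ofReal_mul,
      Complex.re_ofReal_mul, Complex.add_re]
    ring
  have hfun : (fun s : ℝ => (1/(2*M*a)) * negNormSq K L
        (fun m => (a:ℂ)*(v m + (s:ℂ)*w m) + (b:ℂ)*u1 m + (c:ℂ)*u0 m))
      = fun s : ℝ => (1/(2*M*a)) * ((L/(2*K+1))^2 * ((ip K P Zf).re
          + s * (a * ((ip K Q Zf).re + (ip K P w).re)) + s^2 * (a^2 * (ip K Q w).re))) :=
    funext fun s => by rw [key s]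
  rw [hfun]
  have h := ((hasDerivAt_quad ((ip K P Zf).re) (a * ((ip K Q Zf).re + (ip K P w).re))
      (a^2 * (ip K Q w).re)).const_mul ((L/(2*K+1))^2 : ℝ)).const_mul (1/(2*M*a) : ℝ)
  refine h.congr_deriv ?_
  have hY : (ip K Q Zf).re = (ip K P w).re := by
    rw [hQ, hP, ip_selfadj K L (-1) w Zf]
    exact ip_re_comm K w (specOp K L (-1) Zf)
  rw [invNegLapN_def, ← hP, hY]
  field_simp
  ring

lemma im_cube {x : ℂ} (hx : x.im = 0) : (x ^ 3).im = 0 := by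
  have hx' : x = (x.re : ℂ) := Complex.ext rfl (by simp [hx])
  rw [hx']
  simp [← Complex.ofReal_pow]

lemma keyDeriv (K : ℕ) (L ε M a b c : ℝ) (hL : 0 < L) (hM : 0 < M) (ha : 0 < a)
    (u1 u0 v w : GridFn K) (hv : RealValued v) (hw : RealValued w) :
    HasDerivAt (fun s : ℝ => GN K L ε M a b c u1 u0 (fun m => v m + (s : ℂ) * w m))
      ((L / (2*K+1))^2 * (ip K (fun m =>
          ((1/M : ℝ) : ℂ) * invNegLapN K L
            (fun m' => (a:ℂ) * v m' + (b:ℂ) * u1 m' + (c:ℂ) * u0 m') m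
          + muN K L ε v m) w).re) 0 := by
  have h1 := hasDerivAt_F1 K L M a b c hM ha u1 u0 v w
  have h2 := hasDerivAt_EN K hL ε v w hv hw
  have h := h1.add h2
  have hfun : (fun s : ℝ => GN K L ε M a b c u1 u0 (fun m => v m + (s:ℂ) * w m))
      = fun s : ℝ => (1/(2*M*a)) * negNormSq K L
          (fun m => (a:ℂ)*(v m + (s:ℂ)*w m) + (b:ℂ)*u1 m + (c:ℂ)*u0 m)
        + EN K L ε (fun m => v m + (s:ℂ)*w m) := by
    funext s
    simp only [GN]
  rw [hfun]
  refine h.congr_deriv ?_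
  have hsplit : ip K (fun m => ((1/M : ℝ) : ℂ) * invNegLapN K L
        (fun m' => (a:ℂ) * v m' + (b:ℂ) * u1 m' + (c:ℂ) * u0 m') m + muN K L ε v m) w
      = ((1/M : ℝ) : ℂ) * ip K (invNegLapN K L
          (fun m' => (a:ℂ) * v m' + (b:ℂ) * u1 m' + (c:ℂ) * u0 m')) w
        + ip K (muN K L ε v) w := by
    rw [ip, ip, ip, Finset.mul_sum, ← Finset.sum_add_distrib]
    refine Finset.sum_congr rfl fun m _ => ?_
    ring
  rw [hsplit, Complex.add_re, Complex.re_ofReal_mul]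
  ring

end PFCaux

open PFCaux

/-- `v` solves the fully discrete BDF2–PFC equation
`a v + b u¹ + c u⁰ = M Δ_N(μ_N(v))` if and only if `v` is a critical point of `G_N`
along mass-conserving (zero-mean) directions. -/
theorem bdf2_pfc_iff_critical_point
    (K : ℕ) (hK : 1 ≤ K) (L : ℝ) (hL : 0 < L) (ε : ℝ) (M : ℝ) (hM : 0 < M)
    (a : ℝ) (ha : 0 < a) (b c : ℝ) (u1 u0 v : GridFn K)
    (hu1 : RealValued u1) (hu0 : RealValued u0) (hv : RealValued v)
    (hmass : (a : ℂ) * (∑ s, v s) + (b : ℂ) * (∑ s, u1 s) + (c : ℂ) * (∑ s, u0 s) = 0) :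
    (∀ m, (a : ℂ) * v m + (b : ℂ) * u1 m + (c : ℂ) * u0 m
        = (M : ℂ) * lapN K L (muN K L ε v) m) ↔
    (∀ w : GridFn K, RealValued w → ZeroMean w →
      HasDerivAt (fun s : ℝ => GN K L ε M a b c u1 u0 (fun m => v m + (s : ℂ) * w m))
        0 0) := by
  classical
  set Zf : GridFn K := fun m' => (a:ℂ) * v m' + (b:ℂ) * u1 m' + (c:ℂ) * u0 m' with hZf
  set g : GridFn K := fun m => ((1/M : ℝ) : ℂ) * invNegLapN K L Zf m + muN K L ε v m with hg
  have hM' : (M : ℂ) ≠ 0 := by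
    simp only [ne_eq, Complex.ofReal_eq_zero]
    exact hM.ne'
  have hsumZ : ∑ s, Zf s = 0 := by
    have : ∑ s, Zf s = (a:ℂ) * (∑ s, v s) + (b:ℂ) * (∑ s, u1 s) + (c:ℂ) * (∑ s, u0 s) := by
      simp only [hZf]
      rw [Finset.sum_add_distrib, Finset.sum_add_distrib, Finset.mul_sum, Finset.mul_sum,
        Finset.mul_sum]
    rw [this, hmass]
  have hdftZ : dft K Zf (0, 0) = 0 := by
    rw [dft_zero_eq, hsumZ, mul_zero]
  have hh2 : ((L / (2*K+1))^2 : ℝ) ≠ 0 := by positivity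
  constructor
  · intro heq w hw hw0
    have hk := keyDeriv K L ε M a b c hL hM ha u1 u0 v w hv hw
    have hgconst : ∀ m, g m = dft K (muN K L ε v) (0, 0) := by
      intro m
      have hZeq : Zf = fun m' => ((-M : ℝ) : ℂ) * specOp K L 1 (muN K L ε v) m' := by
        funext m'
        simp only [hZf]
        rw [heq m']
        simp only [lapN]
        push_cast
        ring
      have hcanc := specOp_cancel K hL (-1) (muN K L ε v) m
      simp only [neg_neg] at hcanc
      have hPm : invNegLapN K L Zf m
          = ((-M : ℝ) : ℂ) * (muN K L ε v m - dft K (muN K L ε v) (0, 0)) := by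
        rw [invNegLapN_def, hZeq, specOp_smul, hcanc]
      simp only [hg]
      rw [hPm]
      push_cast
      field_simp
      ring
    have hzero : ((L / (2*K+1))^2 : ℝ) * (ip K g w).re = 0 := by
      have hipzero : ip K g w = 0 := by
        rw [ip]
        have : ∀ m' ∈ (Finset.univ : Finset (Fin (2*K+1) × Fin (2*K+1))),
            g m' * (starRingEnd ℂ) (w m')
              = dft K (muN K L ε v) (0, 0) * (starRingEnd ℂ) (w m') := by
          intro m' _
          rw [hgconst m']
        rw [Finset.sum_congr rfl this, ← Finset.mul_sum, ← map_sum, hw0, map_zero, mul_zero]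
      rw [hipzero]
      simp
    rw [← hg] at hk
    rw [hzero] at hk
    exact hk
  · intro hcrit
    have hC : ∀ w : GridFn K, RealValued w → ZeroMean w → (ip K g w).re = 0 := by
      intro w hw hw0
      have hk := keyDeriv K L ε M a b c hL hM ha u1 u0 v w hv hw
      rw [← hg] at hk
      have huniq := hk.unique (hcrit w hw hw0)
      exact (mul_eq_zero.mp huniq).resolve_left hh2
    have hgreal : RealValued g := by
      intro m
      have hZreal : RealValued Zf := by
        intro m'
        simp only [hZf, Complex.add_im, Complex.mul_im, Complex.ofReal_im, Complex.ofReal_re,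
          hv m', hu1 m', hu0 m']
        ring
      have h1 := realValued_specOp L (-1) hZreal
      have h2 := realValued_specOp L 1 hv
      have h3 := realValued_specOp L 2 hv
      simp only [hg, muN, lapN, bilapN_def, Complex.add_im, Complex.mul_im, Complex.ofReal_im,
        Complex.ofReal_re, Complex.neg_im]
      rw [invNegLapN_def]
      simp only [h1 m, h2 m, h3 m, im_cube (hv m), hv m]
      norm_num
    set t : ℝ := (∑ s, g s).re / ((2*K+1 : ℝ))^2 with ht
    set w0 : GridFn K := fun m => g m - (t : ℂ) with hw0def
    have hw0real : RealValued w0 := by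
      intro m
      simp only [hw0def, Complex.sub_im, hgreal m, Complex.ofReal_im]
      ring
    have hn2 : ((2*K+1 : ℝ))^2 ≠ 0 := by positivity
    have hw0mean : ZeroMean w0 := by
      rw [ZeroMean]
      simp only [hw0def]
      rw [Finset.sum_sub_distrib, Finset.sum_const, Finset.card_univ]
      have hcard : Fintype.card (Fin (2*K+1) × Fin (2*K+1)) = (2*K+1) * (2*K+1) := by
        rw [Fintype.card_prod, Fintype.card_fin]
      rw [hcard, nsmul_eq_mul]
      have hsumg : ∑ s, g s = (((∑ s, g s).re : ℝ) : ℂ) := by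
        refine Complex.ext rfl ?_
        rw [Complex.im_sum]
        simp only [Complex.ofReal_im]
        exact Finset.sum_eq_zero fun m _ => hgreal m
      rw [hsumg, ht]
      have hnc : (2 * (K:ℂ) + 1) ≠ 0 := by
        have h9 : ((2*K+1 : ℕ) : ℂ) ≠ 0 := Nat.cast_ne_zero.mpr (by omega)
        push_cast at h9
        exact h9
      push_cast
      field_simp
      ring
    have h0 := hC w0 hw0real hw0mean
    have hip00 : ip K g w0 = ip K w0 w0 := by
      have : ip K g w0 = ip K w0 w0 + (t : ℂ) * (starRingEnd ℂ) (∑ m, w0 m) := by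
        rw [ip, ip, map_sum, Finset.mul_sum, ← Finset.sum_add_distrib]
        refine Finset.sum_congr rfl fun m _ => ?_
        have hgm : g m = w0 m + (t : ℂ) := by
          simp only [hw0def]
          ring
        rw [hgm]
        ring
      rw [this, hw0mean, map_zero, mul_zero, add_zero]
    have hnormsum : ∑ m, Complex.normSq (w0 m) = 0 := by
      have : (ip K w0 w0).re = ∑ m, Complex.normSq (w0 m) := by
        rw [ip, Complex.re_sum]
        refine Finset.sum_congr rfl fun m _ => ?_
        rw [Complex.mul_conj]
        simp
      rw [← this, ← hip00, h0]
    have hw0zero : ∀ m, w0 m = 0 := by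
      intro m
      have := (Finset.sum_eq_zero_iff_of_nonneg
        (fun m _ => Complex.normSq_nonneg (w0 m))).mp hnormsum m (Finset.mem_univ m)
      exact Complex.normSq_eq_zero.mp this
    have hkey : ∀ m, g m = (t : ℂ) := by
      intro m
      have h := hw0zero m
      simp only [hw0def] at h
      exact sub_eq_zero.mp h
    intro m
    have hgfun : g = fun _ => (t : ℂ) := funext hkey
    have hswap : (fun m' => muN K L ε v m' + ((1/M : ℝ) : ℂ) * invNegLapN K L Zf m') = g := by
      funext m'
      simp only [hg]
      ring
    have h5 : specOp K L 1
        (fun m' => muN K L ε v m' + ((1/M : ℝ) : ℂ) * invNegLapN K L Zf m') m = 0 := by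
      rw [hswap, hgfun]
      exact specOp_const K L 1 (t : ℂ) m
    rw [specOp_add_smul] at h5
    have hcanc := specOp_cancel K hL 1 Zf m
    rw [hdftZ, sub_zero] at hcanc
    rw [invNegLapN_def] at h5
    rw [hcanc] at h5
    have hZm : Zf m = (a:ℂ) * v m + (b:ℂ) * u1 m + (c:ℂ) * u0 m := by simp only [hZf]
    rw [hZm] at h5
    rw [show ((1/M : ℝ) : ℂ) = ((M:ℂ))⁻¹ by push_cast; simp [one_div]] at h5
    simp only [lapN]
    have h7 : (a:ℂ) * v m + (b:ℂ) * u1 m + (c:ℂ) * u0 m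
        = -((M:ℂ)) * specOp K L 1 (muN K L ε v) m := by
      have h8 := congrArg (fun z => (M:ℂ) * z) h5
      simp only [mul_add, mul_zero, ← mul_assoc, mul_inv_cancel₀ hM', one_mul] at h8
      linear_combination h8
    rw [h7]
    ring
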